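/- Under the stability bound (NE2), for every v ∈ V and every 1 ≤ p ≤ n+1, if I is a uniform random subset of size p of {0,1,…,n}, then E(‖Σ_{i∈I} ω_i R_i T_i v‖²) ≤ λ_max · (p/(n+1)) · a(Pv, v). -/

import Mathlib

open scoped RealInnerProductSpace

lemma card_filter_mem_powersetCard {n p : ℕ} (hp1 : 1 ≤ p) (i : Fin (n + 1)) :
    ((Finset.powersetCard p (Finset.univ : Finset (Fin (n + 1)))).filter
      (fun I => i ∈ I)).card = Nat.choose n (p - 1) := by
  have h : ((Finset.univ : Finset (Fin (n+1))).erase i).card = n := by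
    simp [Finset.card_erase_of_mem]
  have hc := Finset.card_powersetCard (p-1) ((Finset.univ : Finset (Fin (n+1))).erase i)
  rw [h] at hc
  rw [← hc]
  apply Finset.card_nbij' (fun I => I.erase i) (fun J => insert i J)
  · intro I hI
    simp only [Finset.mem_coe, Finset.mem_filter, Finset.mem_powersetCard] at hI
    simp only [Finset.mem_coe, Finset.mem_powersetCard]
    refine ⟨fun x hx => ?_, ?_⟩
    · simp only [Finset.mem_erase] at hx ⊢
      exact ⟨hx.1, Finset.mem_univ x⟩
    · rw [Finset.card_erase_of_mem hI.2, hI.1.2]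
  · intro J hJ
    simp only [Finset.mem_coe, Finset.mem_powersetCard] at hJ
    have hiJ : i ∉ J := fun h => by simpa using hJ.1 h
    simp only [Finset.mem_coe, Finset.mem_filter, Finset.mem_powersetCard]
    refine ⟨⟨Finset.subset_univ _, ?_⟩, Finset.mem_insert_self _ _⟩
    rw [Finset.card_insert_of_notMem hiJ, hJ.2]
    omega
  · intro I hI
    simp only [Finset.mem_coe, Finset.mem_filter] at hI
    exact Finset.insert_erase hI.2
  · intro J hJ
    simp only [Finset.mem_coe, Finset.mem_powersetCard] at hJ
    have hiJ : i ∉ J := fun h => by simpa using hJ.1 h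
    exact Finset.erase_insert hiJ

/-- Under the stability bound (NE2), for every `v ∈ V` and `1 ≤ p ≤ n+1`,
if `I` is a uniform random subset of size `p` of `{0,…,n}`, then
`E(‖∑_{i∈I} ω_i R_i T_i v‖²) ≤ λ_max (p/(n+1)) a(Pv, v)`, where `T_i = R_i^*` and
`P = ∑_i ω_i R_i T_i` is the additive Schwarz operator. -/
theorem expectation_norm_sq_randomized_additive_schwarz
    {V : Type*} [NormedAddCommGroup V] [InnerProductSpace ℝ V] [CompleteSpace V]
    {n : ℕ} {W : Fin (n + 1) → Type*}
    [∀ i, NormedAddCommGroup (W i)] [∀ i, InnerProductSpace ℝ (W i)]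
    [∀ i, CompleteSpace (W i)]
    (R : ∀ i, W i →L[ℝ] V) (ω : Fin (n + 1) → ℝ) (hω : ∀ i, 0 < ω i)
    (lmax : ℝ) (hlmax : 0 < lmax)
    (hNE2 : ∀ w : ∀ i, W i,
      ‖∑ i, ω i • R i (w i)‖ ^ 2 ≤ lmax * ∑ i, ω i * ‖w i‖ ^ 2)
    (p : ℕ) (hp1 : 1 ≤ p) (hp2 : p ≤ n + 1) (v : V) :
    (((n + 1).choose p : ℝ))⁻¹ *
        ∑ I ∈ Finset.powersetCard p (Finset.univ : Finset (Fin (n + 1))),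
          ‖∑ i ∈ I, ω i • R i ((ContinuousLinearMap.adjoint (R i)) v)‖ ^ 2 ≤
      lmax * ((p : ℝ) / (n + 1)) *
        ⟪(∑ i, ω i • R i ((ContinuousLinearMap.adjoint (R i)) v)), v⟫ := by
  set T : ∀ i, W i := fun i => (ContinuousLinearMap.adjoint (R i)) v with hT
  -- Step 1: per-subset bound
  have step1 : ∀ I ∈ Finset.powersetCard p (Finset.univ : Finset (Fin (n + 1))),
      ‖∑ i ∈ I, ω i • R i (T i)‖ ^ 2 ≤ lmax * ∑ i ∈ I, ω i * ‖T i‖ ^ 2 := by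
    intro I _
    have := hNE2 (fun i => if i ∈ I then T i else 0)
    have e1 : ∑ i, ω i • R i (if i ∈ I then T i else 0) = ∑ i ∈ I, ω i • R i (T i) := by
      rw [← Finset.sum_subset (Finset.subset_univ I)
        (fun x _ hx => by simp [hx])]
      exact Finset.sum_congr rfl fun i hi => by rw [if_pos hi]
    have e2 : ∑ i, ω i * ‖(if i ∈ I then T i else 0 : W i)‖ ^ 2
        = ∑ i ∈ I, ω i * ‖T i‖ ^ 2 := by
      rw [← Finset.sum_subset (Finset.subset_univ I)
        (fun x _ hx => by simp [hx])]
      exact Finset.sum_congr rfl fun i hi => by rw [if_pos hi]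
    rw [← e1, ← e2]
    exact this
  -- Step 2: the double-counting identity
  have step2 : ∑ I ∈ Finset.powersetCard p (Finset.univ : Finset (Fin (n + 1))),
      ∑ i ∈ I, ω i * ‖T i‖ ^ 2
      = (Nat.choose n (p - 1) : ℝ) * ∑ i, ω i * ‖T i‖ ^ 2 := by
    rw [Finset.mul_sum]
    have : ∀ I ∈ Finset.powersetCard p (Finset.univ : Finset (Fin (n + 1))),
        ∑ i ∈ I, ω i * ‖T i‖ ^ 2
          = ∑ i, if i ∈ I then ω i * ‖T i‖ ^ 2 else 0 := by
      intro I _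
      rw [Finset.sum_ite_mem, Finset.univ_inter]
    rw [Finset.sum_congr rfl this, Finset.sum_comm]
    apply Finset.sum_congr rfl
    intro i _
    rw [Finset.sum_ite, Finset.sum_const_zero, add_zero, Finset.sum_const,
      nsmul_eq_mul, card_filter_mem_powersetCard hp1 i]
  -- Step 3: inner product identity
  have step3 : ⟪(∑ i, ω i • R i (T i)), v⟫ = ∑ i, ω i * ‖T i‖ ^ 2 := by
    rw [sum_inner]
    apply Finset.sum_congr rfl
    intro i _
    rw [real_inner_smul_left]
    congr 1
    rw [← ContinuousLinearMap.adjoint_inner_right]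
    exact real_inner_self_eq_norm_sq (T i)
  -- nonnegativity of S
  have hS : (0:ℝ) ≤ ∑ i, ω i * ‖T i‖ ^ 2 :=
    Finset.sum_nonneg fun i _ => mul_nonneg (hω i).le (by positivity)
  rw [step3]
  -- combinatorial identity: choose n (p-1) / choose (n+1) p = p / (n+1)
  have hchoosepos : 0 < ((n + 1).choose p : ℝ) := by
    exact_mod_cast Nat.choose_pos hp2
  have hcomb : ((n+1):ℝ) * (Nat.choose n (p-1) : ℝ) = ((n+1).choose p : ℝ) * p := by
    have h0 := Nat.add_one_mul_choose_eq n (p - 1)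
    have hp : p - 1 + 1 = p := Nat.succ_pred_eq_of_pos hp1
    simp only [Nat.succ_eq_add_one, hp] at h0
    exact_mod_cast h0
  calc (((n + 1).choose p : ℝ))⁻¹ *
        ∑ I ∈ Finset.powersetCard p (Finset.univ : Finset (Fin (n + 1))),
          ‖∑ i ∈ I, ω i • R i (T i)‖ ^ 2
      ≤ (((n + 1).choose p : ℝ))⁻¹ *
        ∑ I ∈ Finset.powersetCard p (Finset.univ : Finset (Fin (n + 1))),
          (lmax * ∑ i ∈ I, ω i * ‖T i‖ ^ 2) := by
        apply mul_le_mul_of_nonneg_left _ (by positivity)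
        exact Finset.sum_le_sum step1
    _ = (((n + 1).choose p : ℝ))⁻¹ * (lmax * ((Nat.choose n (p - 1) : ℝ) *
          ∑ i, ω i * ‖T i‖ ^ 2)) := by
        rw [← Finset.mul_sum, step2]
    _ = ((((n + 1).choose p : ℝ))⁻¹ * (Nat.choose n (p - 1) : ℝ)) *
          (lmax * ∑ i, ω i * ‖T i‖ ^ 2) := by ring
    _ = lmax * ((p : ℝ) / (n + 1)) * ∑ i, ω i * ‖T i‖ ^ 2 := by
        have key : (((n + 1).choose p : ℝ))⁻¹ * (Nat.choose n (p - 1) : ℝ)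
            = (p : ℝ) / (n + 1) := by
          have hn1 : ((n:ℝ) + 1) ≠ 0 := by positivity
          field_simp
          linarith [hcomb]
        rw [key]; ring
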